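/- Let X be a set of minimal L-structures and M a minimal L-structure that is not isomorphic to any member of X. The following are equivalent: (1) every open neighborhood of qf(M) in the Stone topology on S_L contains qf(N) for some N ∈ X; (2) M is isomorphic to the core (the substructure generated by the empty set) of an ultraproduct ∏_{i∈I} M_i / D, where (M_i)_{i∈I} is a family of pairwise non-isomorphic structures from X and D is a non-principal ultrafilter on I; (3) M embeds into such an ultraproduct of pairwise non-isomorphic structures from X over a non-principal ultrafilter. -/

import Mathlib

open FirstOrder FirstOrder.Language

universe u v

/-- An `L`-structure is *minimal* if it has no proper substructure; equivalently,
it is generated by the empty set. -/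
def FirstOrder.Language.IsMinimal (L : FirstOrder.Language.{u, v}) (M : Type w) [L.Structure M] :
    Prop :=
  Substructure.closure L (∅ : Set M) = ⊤

/-- `qf L M` is the quantifier-free theory of `M`: the set of quantifier-free
`L`-sentences true in `M`. -/
def FirstOrder.Language.qf (L : FirstOrder.Language.{u, v}) (M : Type w) [L.Structure M] :
    Set L.Sentence :=
  {φ : L.Sentence | BoundedFormula.IsQF φ ∧ M ⊨ φ}

/-- `SL L` is the set of isomorphism types of minimal `L`-structures, identified with
the quantifier-free theories of minimal `L`-structures (equivalently, with the maximal
finitely satisfiable sets of quantifier-free `L`-sentences). -/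
def SL (L : FirstOrder.Language.{u, v}) : Type (max u v) :=
  {S : Set L.Sentence // ∃ (M : Type (max u v)) (_ : L.Structure M), L.IsMinimal M ∧ S = L.qf M}

/-- The basic set `U_φ = {S ∈ S_L : φ ∈ S}`. -/
def USet {L : FirstOrder.Language.{u, v}} (φ : L.Sentence) : Set (SL L) :=
  {S : SL L | φ ∈ S.1}

/-- The Stone topology `τ` on `S_L`, with basis `{U_φ : φ ∈ QF(L)}`. -/
instance stoneTopology (L : FirstOrder.Language.{u, v}) : TopologicalSpace (SL L) :=
  TopologicalSpace.generateFrom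
    {V : Set (SL L) | ∃ φ : L.Sentence, BoundedFormula.IsQF φ ∧ V = USet φ}

section Aux

variable {L : FirstOrder.Language.{u, v}} {M : Type w₁} {P : Type w₂}
  [L.Structure M] [L.Structure P]

/-- Quantifier-free sentences transfer along embeddings. -/
lemma realize_iff_of_embedding (g : M ↪[L] P) {φ : L.Sentence}
    (hq : BoundedFormula.IsQF φ) : M ⊨ φ ↔ P ⊨ φ := by
  have h := hq.realize_embedding (f := g) (v := (default : Empty → M))
    (xs := (default : Fin 0 → M))
  rw [Subsingleton.elim ((g : M → P) ∘ (default : Empty → M)) (default : Empty → P),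
    Subsingleton.elim ((g : M → P) ∘ (default : Fin 0 → M)) (default : Fin 0 → P)] at h
  exact h.symm

lemma qf_eq_of_embedding (g : M ↪[L] P) : L.qf M = L.qf P := by
  ext φ
  constructor
  · rintro ⟨hq, h⟩; exact ⟨hq, (realize_iff_of_embedding g hq).mp h⟩
  · rintro ⟨hq, h⟩; exact ⟨hq, (realize_iff_of_embedding g hq).mpr h⟩

/-- Quantifier-free sentences transfer along inclusions of qf theories. -/
lemma realize_iff_of_qf_subset (h : L.qf M ⊆ L.qf P) {φ : L.Sentence}
    (hq : BoundedFormula.IsQF φ) : M ⊨ φ ↔ P ⊨ φ := by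
  constructor
  · exact fun hr => (h ⟨hq, hr⟩).2
  · intro hr
    by_contra hn
    have hnM : M ⊨ φ.not := hn
    have : P ⊨ φ.not := (h ⟨hq.not, hnM⟩).2
    exact this hr

lemma qf_eq_of_qf_subset (h : L.qf M ⊆ L.qf P) : L.qf M = L.qf P := by
  refine Set.Subset.antisymm h ?_
  rintro φ ⟨hq, hr⟩
  exact ⟨hq, (realize_iff_of_qf_subset h hq).mpr hr⟩

/-- An equiv between equal substructures. -/
def substructureEquivOfEq {S T : L.Substructure M} (h : S = T) : S ≃[L] T := by
  subst h; exact Language.Equiv.refl L S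

/-- If `M` is minimal and its qf theory is contained in that of `P`, then `M` embeds in `P`,
sending closed-term values to closed-term values. -/
noncomputable def embeddingOfQfSubset (hM : L.IsMinimal M) (h : L.qf M ⊆ L.qf P) :
    M ↪[L] P := by
  have htr : ∀ φ : L.Sentence, BoundedFormula.IsQF φ → (M ⊨ φ ↔ P ⊨ φ) :=
    fun φ hq => realize_iff_of_qf_subset h hq
  have hex : ∀ x : M, ∃ t : L.Term Empty, t.realize (default : Empty → M) = x := by
    intro x
    have hx : x ∈ Substructure.closure L (∅ : Set M) := by
      rw [hM]; exact Substructure.mem_top x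
    obtain ⟨t, ht⟩ := Substructure.mem_closure_iff_exists_term.1 hx
    refine ⟨t.relabel (fun s => absurd s.2 (Set.notMem_empty _)), ?_⟩
    rw [Term.realize_relabel, ← ht]
    congr 1
    funext s
    exact absurd s.2 (Set.notMem_empty _)
  choose T hT using hex
  have key : ∀ t₁ t₂ : L.Term Empty,
      t₁.realize (default : Empty → M) = t₂.realize (default : Empty → M) ↔
      t₁.realize (default : Empty → P) = t₂.realize (default : Empty → P) := by
    intro t₁ t₂
    have hq : BoundedFormula.IsQF (t₁.equal t₂ : L.Sentence) :=
      (BoundedFormula.IsAtomic.equal _ _).isQF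
    have := htr _ hq
    simpa only [Sentence.Realize, Formula.realize_equal] using this
  refine ⟨⟨fun x => (T x).realize (default : Empty → P), ?_⟩, ?_, ?_⟩
  · intro x y hxy
    have := (key (T x) (T y)).2 hxy
    rwa [hT x, hT y] at this
  · intro n f xs
    have h1 : (T (Structure.funMap f xs)).realize (default : Empty → M) =
        (Term.func f (fun i => T (xs i))).realize (default : Empty → M) := by
      rw [hT]
      simp only [Term.realize]
      congr 1
      funext i
      rw [hT]
    have h2 := (key _ _).1 h1
    simpa only [Term.realize, Function.comp_def] using h2
  · intro n r xs
    have hq : BoundedFormula.IsQF (r.formula (fun i => T (xs i)) : L.Sentence) :=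
      (BoundedFormula.IsAtomic.rel _ _).isQF
    have h3 := htr _ hq
    simp only [Sentence.Realize, Formula.realize_rel] at h3
    have hxseq : (fun i => Term.realize (default : Empty → M) (T (xs i))) = xs :=
      funext fun i => hT (xs i)
    rw [hxseq] at h3
    exact h3.symm

/-- If `M` is minimal and its qf theory is contained in that of `P`, `M` is isomorphic to the
core of `P`. -/
noncomputable def equivCoreOfQfSubset (hM : L.IsMinimal M) (h : L.qf M ⊆ L.qf P) :
    M ≃[L] Substructure.closure L (∅ : Set P) := by
  let g := embeddingOfQfSubset hM h
  refine (substructureEquivOfEq ?_).comp g.equivRange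
  rw [Hom.range_eq_map, ← hM, Substructure.map_closure, Set.image_empty]

/-- Minimal structures with the same qf theory are isomorphic. -/
noncomputable def equivOfQfEq (hM : L.IsMinimal M) (hP : L.IsMinimal P)
    (h : L.qf M = L.qf P) : M ≃[L] P :=
  (Substructure.topEquiv.comp (substructureEquivOfEq hP)).comp (equivCoreOfQfSubset hM h.le)

end Aux

section StoneAux

variable {L : FirstOrder.Language.{u, v}}

lemma SL.mem_uset_inf (x : SL L) {φ ψ : L.Sentence} (hφ : BoundedFormula.IsQF φ)
    (hψ : BoundedFormula.IsQF ψ) : x ∈ USet (φ ⊓ ψ) ↔ x ∈ USet φ ∧ x ∈ USet ψ := by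
  obtain ⟨S, M₀, i₀, hmin, rfl⟩ := x
  show φ ⊓ ψ ∈ L.qf M₀ ↔ φ ∈ L.qf M₀ ∧ ψ ∈ L.qf M₀
  constructor
  · rintro ⟨-, h⟩
    have h' := Formula.realize_inf.1 h
    exact ⟨⟨hφ, h'.1⟩, ⟨hψ, h'.2⟩⟩
  · rintro ⟨⟨-, h1⟩, ⟨-, h2⟩⟩
    exact ⟨hφ.inf hψ, Formula.realize_inf.2 ⟨h1, h2⟩⟩

lemma SL.mem_uset_top (x : SL L) : x ∈ USet (⊤ : L.Sentence) := by
  obtain ⟨S, M₀, i₀, hmin, rfl⟩ := x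
  exact ⟨BoundedFormula.IsQF.top, Formula.realize_top.2 trivial⟩

lemma exists_basic {U : Set (SL L)} (hU : TopologicalSpace.GenerateOpen
    {V : Set (SL L) | ∃ φ : L.Sentence, BoundedFormula.IsQF φ ∧ V = USet φ} U) :
    ∀ x ∈ U, ∃ φ : L.Sentence, BoundedFormula.IsQF φ ∧ x ∈ USet φ ∧ USet φ ⊆ U := by
  induction hU with
  | basic V hV =>
    intro x hx
    obtain ⟨φ, hq, rfl⟩ := hV
    exact ⟨φ, hq, hx, subset_rfl⟩
  | univ =>
    intro x _
    exact ⟨⊤, BoundedFormula.IsQF.top, SL.mem_uset_top x, Set.subset_univ _⟩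
  | inter U V hUo hVo ihU ihV =>
    intro x hx
    obtain ⟨φ, hφ, hxφ, hsφ⟩ := ihU x hx.1
    obtain ⟨ψ, hψ, hxψ, hsψ⟩ := ihV x hx.2
    refine ⟨φ ⊓ ψ, hφ.inf hψ, (SL.mem_uset_inf x hφ hψ).2 ⟨hxφ, hxψ⟩, ?_⟩
    intro y hy
    have hy' := (SL.mem_uset_inf y hφ hψ).1 hy
    exact ⟨hsφ hy'.1, hsψ hy'.2⟩
  | sUnion S hS ih =>
    intro x hx
    obtain ⟨V, hV, hxV⟩ := hx
    obtain ⟨φ, h1, h2, h3⟩ := ih V hV x hxV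
    exact ⟨φ, h1, h2, h3.trans (Set.subset_sUnion_of_mem hV)⟩

end StoneAux

/-- **Proposition 2.10.** Let `X = {N i : i ∈ ι}` be a set of minimal `L`-structures and `M` a
minimal `L`-structure not isomorphic to any member of `X`. The following are equivalent:
(1) every open neighbourhood of `qf(M)` in the Stone topology on `S_L` contains `qf(N)` for
some `N ∈ X`; (2) `M` is isomorphic to the core of a non-principal ultraproduct of pairwise
non-isomorphic structures from `X`; (3) `M` embeds into such an ultraproduct. -/
theorem limit_point_tfae_ultraproduct (L : FirstOrder.Language.{u, v}) [Nonempty L.Constants]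
    {ι : Type (max u v)} (N : ι → Type (max u v)) [∀ i, L.Structure (N i)]
    (hN : ∀ i, L.IsMinimal (N i))
    (M : Type (max u v)) [iM : L.Structure M] (hM : L.IsMinimal M)
    (hiso : ∀ i, IsEmpty (M ≃[L] N i)) :
    List.TFAE
      [∀ U : Set (SL L), IsOpen U → (⟨L.qf M, M, iM, hM, rfl⟩ : SL L) ∈ U →
         ∃ i, (⟨L.qf (N i), N i, inferInstance, hN i, rfl⟩ : SL L) ∈ U,
       ∃ (κ : Type (max u v)) (f : κ → ι) (D : Ultrafilter κ),
         (∀ k k' : κ, k ≠ k' → IsEmpty (N (f k) ≃[L] N (f k'))) ∧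
         (∀ s : Set κ, s.Finite → s ∉ D) ∧
         Nonempty
           (M ≃[L]
             Substructure.closure L (∅ : Set ((D : Filter κ).Product fun k => N (f k)))),
       ∃ (κ : Type (max u v)) (f : κ → ι) (D : Ultrafilter κ),
         (∀ k k' : κ, k ≠ k' → IsEmpty (N (f k) ≃[L] N (f k'))) ∧
         (∀ s : Set κ, s.Finite → s ∉ D) ∧
         Nonempty (M ↪[L] (D : Filter κ).Product fun k => N (f k))] := by
  classical
  haveI hNE : ∀ i, Nonempty (N i) :=
    fun i => ⟨Structure.funMap (Classical.arbitrary L.Constants) finZeroElim⟩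
  tfae_have 1 → 2 := by
    intro h1
    let κ := {S : Set L.Sentence // ∃ i, S = L.qf (N i)}
    have hf : ∀ k : κ, ∃ i, k.1 = L.qf (N i) := fun k => k.2
    choose f hfspec using hf
    have hdisc : ∀ k : κ, ∃ χ : L.Sentence, χ ∈ L.qf M ∧ χ ∉ k.1 := by
      intro k
      by_contra hc
      push_neg at hc
      have hsub : L.qf M ⊆ k.1 := fun χ hχ => hc χ hχ
      rw [hfspec k] at hsub
      exact (hiso (f k)).false (equivOfQfEq hM (hN (f k)) (qf_eq_of_qf_subset hsub))
    choose χ hχM hχnot using hdisc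
    let pt : SL L := ⟨L.qf M, M, iM, hM, rfl⟩
    let ptN : ι → SL L := fun i => ⟨L.qf (N i), N i, inferInstance, hN i, rfl⟩
    let kof : ι → κ := fun i => ⟨L.qf (N i), i, rfl⟩
    let gen : Set (Set κ) :=
      {A | ∃ φ : L.Sentence, φ ∈ L.qf M ∧ A = {k : κ | φ ∈ k.1}} ∪
        {A | ∃ s : Set κ, s.Finite ∧ A = sᶜ}
    have hNeBot : (Filter.generate gen).NeBot := by
      rw [Filter.generate_neBot_iff]
      intro t hts htf
      have hW : ∀ A : Set κ, ∃ W : Set (SL L), IsOpen W ∧ pt ∈ W ∧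
          (A ∈ t → ∀ i : ι, ptN i ∈ W → kof i ∈ A) := by
        intro A
        by_cases hA : A ∈ t
        · rcases hts hA with ⟨φ, hφM, rfl⟩ | ⟨s, hsf, rfl⟩
          · refine ⟨USet φ, ?_, hφM, ?_⟩
            · exact TopologicalSpace.GenerateOpen.basic _ ⟨φ, hφM.1, rfl⟩
            · intro _ i hi
              exact hi
          · refine ⟨⋂ k ∈ s, USet (χ k), ?_, ?_, ?_⟩
            · exact hsf.isOpen_biInter fun k _ =>
                TopologicalSpace.GenerateOpen.basic _ ⟨χ k, (hχM k).1, rfl⟩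
            · exact Set.mem_iInter₂.2 fun k _ => hχM k
            · intro _ i hi hk
              exact hχnot (kof i) (Set.mem_iInter₂.1 hi (kof i) hk)
        · exact ⟨Set.univ, isOpen_univ, trivial, fun h => absurd h hA⟩
      choose W hWo hWpt hWspec using hW
      have hUo : IsOpen (⋂ A ∈ t, W A) := htf.isOpen_biInter fun A _ => hWo A
      have hptU : pt ∈ ⋂ A ∈ t, W A := Set.mem_iInter₂.2 fun A _ => hWpt A
      obtain ⟨i, hi⟩ := h1 _ hUo hptU
      exact ⟨kof i, fun A hA => hWspec A hA i (Set.mem_iInter₂.1 hi A hA)⟩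
    haveI := hNeBot
    let D := Ultrafilter.of (Filter.generate gen)
    have hmemD : ∀ A ∈ gen, A ∈ D := fun A hA =>
      Ultrafilter.of_le _ (Filter.mem_generate_of_mem hA)
    have hnp : ∀ s : Set κ, s.Finite → s ∉ D := by
      intro s hs hsD
      exact (Ultrafilter.compl_mem_iff_notMem.1 (hmemD _ (Or.inr ⟨s, hs, rfl⟩))) hsD
    have hpair : ∀ k k' : κ, k ≠ k' → IsEmpty (N (f k) ≃[L] N (f k')) := by
      intro k k' hne
      refine ⟨fun e => hne (Subtype.ext ?_)⟩
      rw [hfspec k, hfspec k']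
      exact qf_eq_of_embedding e.toEmbedding
    have hsub : L.qf M ⊆ L.qf ((D : Filter κ).Product fun k => N (f k)) := by
      rintro φ ⟨hq, hr⟩
      refine ⟨hq, ?_⟩
      rw [Ultraproduct.sentence_realize, Filter.eventually_iff]
      have hAD : {k : κ | φ ∈ k.1} ∈ D := hmemD _ (Or.inl ⟨φ, ⟨hq, hr⟩, rfl⟩)
      refine Filter.mem_of_superset hAD ?_
      intro k hk
      have hm : φ ∈ L.qf (N (f k)) := by rw [← hfspec k]; exact hk
      exact hm.2
    exact ⟨κ, f, D, hpair, hnp, ⟨equivCoreOfQfSubset hM hsub⟩⟩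
  tfae_have 2 → 3 := by
    rintro ⟨κ, f, D, hpair, hnp, ⟨e⟩⟩
    exact ⟨κ, f, D, hpair, hnp, ⟨(Substructure.subtype _).comp e.toEmbedding⟩⟩
  tfae_have 3 → 1 := by
    rintro ⟨κ, f, D, hpair, hnp, ⟨g⟩⟩
    intro U hU hptU
    obtain ⟨φ, hq, hxφ, hsub⟩ := exists_basic hU _ hptU
    have hMφ : M ⊨ φ := (hxφ : φ ∈ L.qf M).2
    have hPφ : (D : Filter κ).Product (fun k => N (f k)) ⊨ φ :=
      (realize_iff_of_embedding g hq).1 hMφ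
    have hset := (Ultraproduct.sentence_realize (M := fun k => N (f k)) φ).1 hPφ
    rw [Filter.eventually_iff] at hset
    obtain ⟨k, hk⟩ := Ultrafilter.nonempty_of_mem (show _ ∈ D from hset)
    exact ⟨f k, hsub ⟨hq, hk⟩⟩
  tfae_finish
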